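/- Fix r ∈ {23, 47, 71, 83}, let f(t) = (84t + r)·(1008t + 12r − 1), and for a prime q let ω_f(q) be the number of roots of f in ℤ/qℤ; let ω(q) be the number of roots of t(t+2) in ℤ/qℤ (so ω(2) = 1 and ω(q) = 2 for odd primes q). Then for every real x ≥ 7, ∏_{q prime, q ≤ x} (1 − 1/q)^{-2}(1 − ω_f(q)/q) = (42/5) · ∏_{q prime, q ≤ x} (1 − 1/q)^{-2}(1 − ω(q)/q). -/

import Mathlib

/-- `ω_f(q)`: the number of roots of `f(t) = (84t + r)(1008t + 12r − 1)` in `ℤ/qℤ`. -/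
noncomputable def omegaF (r q : ℕ) : ℕ :=
  Nat.card {t : ZMod q //
    (84 * t + (r : ZMod q)) * (1008 * t + 12 * (r : ZMod q) - 1) = 0}

/-- `ω(q)`: the number of roots of `t(t + 2)` in `ℤ/qℤ`. -/
noncomputable def omegaTwin (q : ℕ) : ℕ :=
  Nat.card {t : ZMod q // t * (t + 2) = 0}

lemma prime_dvd_84 {q : ℕ} (hq : q.Prime) (h : q ∣ 84) : q = 2 ∨ q = 3 ∨ q = 7 := by
  have h' : q ∣ 2 * (2 * (3 * 7)) := by
    have : (84 : ℕ) = 2 * (2 * (3 * 7)) := by norm_num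
    rwa [this] at h
  rcases hq.dvd_mul.mp h' with h | h
  · exact Or.inl ((Nat.prime_dvd_prime_iff_eq hq Nat.prime_two).mp h)
  rcases hq.dvd_mul.mp h with h | h
  · exact Or.inl ((Nat.prime_dvd_prime_iff_eq hq Nat.prime_two).mp h)
  rcases hq.dvd_mul.mp h with h | h
  · exact Or.inr (Or.inl ((Nat.prime_dvd_prime_iff_eq hq Nat.prime_three).mp h))
  · exact Or.inr (Or.inr ((Nat.prime_dvd_prime_iff_eq hq (by norm_num)).mp h))

lemma natCast_ne_zero_of_prime {q n : ℕ} (hq : q.Prime)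
    (h : ¬ q ∣ n) : (n : ZMod q) ≠ 0 := by
  haveI : Fact q.Prime := ⟨hq⟩
  simpa [ZMod.natCast_eq_zero_iff] using h

lemma omegaTwin_prime {q : ℕ} (hq : q.Prime) (h2 : q ≠ 2) : omegaTwin q = 2 := by
  haveI : Fact q.Prime := ⟨hq⟩
  have htwo : (2 : ZMod q) ≠ 0 := by
    have := natCast_ne_zero_of_prime (n := 2) hq
      (by rw [Nat.prime_dvd_prime_iff_eq hq Nat.prime_two]; exact h2)
    simpa using this
  have hset : {t : ZMod q | t * (t + 2) = 0} = {0, -2} := by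
    ext t
    simp only [Set.mem_setOf_eq, Set.mem_insert_iff, Set.mem_singleton_iff, mul_eq_zero]
    constructor
    · rintro (h | h)
      · exact Or.inl h
      · exact Or.inr (eq_neg_of_add_eq_zero_left h)
    · rintro (rfl | rfl) <;> simp
  have hcard : Nat.card {t : ZMod q // t * (t + 2) = 0}
      = Nat.card ({0, -2} : Set (ZMod q)) :=
    Nat.card_congr (Equiv.setCongr hset)
  rw [omegaTwin, hcard, Nat.card_coe_set_eq, Set.ncard_pair]
  intro h
  exact htwo (by linear_combination h)

lemma omegaF_prime {r q : ℕ} (hq : q.Prime) (h2 : q ≠ 2) (h3 : q ≠ 3) (h7 : q ≠ 7) :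
    omegaF r q = 2 := by
  haveI : Fact q.Prime := ⟨hq⟩
  have h84 : (84 : ZMod q) ≠ 0 := by
    have := natCast_ne_zero_of_prime (n := 84) hq (by
      intro h; rcases prime_dvd_84 hq h with h | h | h <;> simp_all)
    simpa using this
  have h12 : (12 : ZMod q) ≠ 0 := by
    have := natCast_ne_zero_of_prime (n := 12) hq (by
      intro h
      rcases prime_dvd_84 hq (h.trans (by norm_num)) with h' | h' | h'
      · exact h2 h'
      · exact h3 h'
      · subst h'; norm_num at h)
    simpa using this
  have h1008 : (1008 : ZMod q) ≠ 0 := by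
    have : (1008 : ZMod q) = 12 * 84 := by norm_num
    rw [this]
    exact mul_ne_zero h12 h84
  set u : ZMod q := -(r : ZMod q) * 84⁻¹ with hu_def
  set v : ZMod q := (1 - 12 * (r : ZMod q)) * 1008⁻¹ with hv_def
  have hu : 84 * u + (r : ZMod q) = 0 := by
    rw [hu_def]; field_simp <;> ring
  have hv : 1008 * v + 12 * (r : ZMod q) - 1 = 0 := by
    rw [hv_def]; field_simp <;> ring
  have huv : u ≠ v := by
    intro h
    have e2 : 1008 * u + 12 * (r : ZMod q) - 1 = 0 := by rw [h]; exact hv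
    have hone : (1 : ZMod q) = 0 := by linear_combination 12 * hu - e2
    exact one_ne_zero hone
  have hset : {t : ZMod q |
      (84 * t + (r : ZMod q)) * (1008 * t + 12 * (r : ZMod q) - 1) = 0} = {u, v} := by
    ext t
    simp only [Set.mem_setOf_eq, Set.mem_insert_iff, Set.mem_singleton_iff, mul_eq_zero]
    constructor
    · rintro (h | h)
      · left
        have : (84 : ZMod q) * t = 84 * u := by linear_combination h - hu
        exact mul_left_cancel₀ h84 this
      · right
        have : (1008 : ZMod q) * t = 1008 * v := by linear_combination h - hv
        exact mul_left_cancel₀ h1008 this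
    · rintro (rfl | rfl)
      · exact Or.inl hu
      · exact Or.inr hv
  have hcard : Nat.card {t : ZMod q //
      (84 * t + (r : ZMod q)) * (1008 * t + 12 * (r : ZMod q) - 1) = 0}
      = Nat.card ({u, v} : Set (ZMod q)) :=
    Nat.card_congr (Equiv.setCongr hset)
  rw [omegaF, hcard, Nat.card_coe_set_eq, Set.ncard_pair huv]

lemma omegaF_small {r : ℕ} (hr : r = 23 ∨ r = 47 ∨ r = 71 ∨ r = 83) :
    omegaF r 2 = 0 ∧ omegaF r 3 = 0 ∧ omegaF r 7 = 0 := by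
  rcases hr with rfl | rfl | rfl | rfl <;>
    refine ⟨?_, ?_, ?_⟩ <;> (rw [omegaF, Nat.card_eq_fintype_card]; decide)

lemma omegaTwin_two : omegaTwin 2 = 1 := by
  rw [omegaTwin, Nat.card_eq_fintype_card]; decide

/-- The partial Hardy–Littlewood products for `f₁(t) = 84t + r`,
`f₂(t) = 1008t + 12r − 1` and for the twin-prime polynomials differ exactly by
the factor `42/5`, for every `x ≥ 7`. -/
theorem hardy_littlewood_partial_products (r : ℕ)
    (hr : r = 23 ∨ r = 47 ∨ r = 71 ∨ r = 83) (x : ℝ) (hx : 7 ≤ x) :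
    (∏ q ∈ Nat.primesBelow (⌊x⌋₊ + 1),
        ((1 - (q : ℝ)⁻¹)⁻¹) ^ 2 * (1 - (omegaF r q : ℝ) / (q : ℝ))) =
      42 / 5 * ∏ q ∈ Nat.primesBelow (⌊x⌋₊ + 1),
        ((1 - (q : ℝ)⁻¹)⁻¹) ^ 2 * (1 - (omegaTwin q : ℝ) / (q : ℝ)) := by
  have hfloor : 7 ≤ ⌊x⌋₊ := Nat.le_floor (by exact_mod_cast hx)
  set s := Nat.primesBelow (⌊x⌋₊ + 1) with hs
  have h2 : 2 ∈ s := Nat.mem_primesBelow.mpr ⟨by omega, Nat.prime_two⟩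
  have h3 : 3 ∈ s.erase 2 :=
    Finset.mem_erase.mpr ⟨by norm_num, Nat.mem_primesBelow.mpr ⟨by omega, Nat.prime_three⟩⟩
  have h7 : 7 ∈ (s.erase 2).erase 3 :=
    Finset.mem_erase.mpr ⟨by norm_num, Finset.mem_erase.mpr
      ⟨by norm_num, Nat.mem_primesBelow.mpr ⟨by omega, by norm_num⟩⟩⟩
  set f : ℕ → ℝ := fun q => ((1 - (q : ℝ)⁻¹)⁻¹) ^ 2 * (1 - (omegaF r q : ℝ) / (q : ℝ))
    with hf
  set g : ℕ → ℝ := fun q => ((1 - (q : ℝ)⁻¹)⁻¹) ^ 2 * (1 - (omegaTwin q : ℝ) / (q : ℝ))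
    with hg
  rw [← Finset.mul_prod_erase s f h2, ← Finset.mul_prod_erase _ f h3,
    ← Finset.mul_prod_erase _ f h7, ← Finset.mul_prod_erase s g h2,
    ← Finset.mul_prod_erase _ g h3, ← Finset.mul_prod_erase _ g h7]
  have hprod : ∏ q ∈ ((s.erase 2).erase 3).erase 7, f q
      = ∏ q ∈ ((s.erase 2).erase 3).erase 7, g q := by
    refine Finset.prod_congr rfl fun q hq => ?_
    have hq7 := Finset.mem_erase.mp hq
    have hq3 := Finset.mem_erase.mp hq7.2
    have hq2 := Finset.mem_erase.mp hq3.2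
    have hqp : q.Prime := Nat.prime_of_mem_primesBelow hq2.2
    rw [hf, hg]
    simp only
    rw [omegaF_prime hqp hq2.1 hq3.1 hq7.1, omegaTwin_prime hqp hq2.1]
  rw [hprod]
  obtain ⟨e2, e3, e7⟩ := omegaF_small hr
  have t3 : omegaTwin 3 = 2 := omegaTwin_prime Nat.prime_three (by norm_num)
  have t7 : omegaTwin 7 = 2 := omegaTwin_prime (by norm_num) (by norm_num)
  have hf2 : f 2 = 4 := by simp [hf, e2]; norm_num
  have hf3 : f 3 = 9 / 4 := by simp [hf, e3]; norm_num
  have hf7 : f 7 = 49 / 36 := by simp [hf, e7]; norm_num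
  have hg2 : g 2 = 2 := by simp [hg, omegaTwin_two]; norm_num
  have hg3 : g 3 = 3 / 4 := by simp [hg, t3]; norm_num
  have hg7 : g 7 = 35 / 36 := by simp [hg, t7]; norm_num
  rw [hf2, hf3, hf7, hg2, hg3, hg7]
  ring
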